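/- Let 𝒢 be a finite group, D, D₁, D₂ ∈ ℕ positive, and let U: 𝒢 → U(D₁), V: 𝒢 → U(D₂), W: 𝒢 → U(D) be projective unitary representations. Let 𝒢 act on finite sets X and Y, and act on X×Y diagonally by g·(x,y) = (g·x, g·y). Let (M_x)_{x∈X} be a (U,X)-covariant POVM on ℂ^{D₁}, (N_y)_{y∈Y} a (V,Y)-covariant POVM on ℂ^{D₂}, and (G_{x,y})_{(x,y)∈X×Y} a (W, X×Y)-covariant POVM on ℂ^D. If there exists a channel Ψ from D×D matrices to (D₁·D₂)×(D₁·D₂) matrices with tr[Ψ(ρ)(M_x ⊗ N_y)] = tr[ρ G_{x,y}] for all ρ, x, y, then there exists a channel Φ with the same property which is in addition (W, U⊗V)-covariant: Φ(W(g) ρ W(g)*) = (U(g) ⊗ V(g)) Φ(ρ) (U(g) ⊗ V(g))* for all g ∈ 𝒢 and all ρ. -/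

import Mathlib

open Kronecker Matrix
open scoped ComplexOrder

noncomputable section

/-- A linear map between matrix algebras is completely positive if it maps positive
semidefinite block matrices (with any finite number of blocks) to positive semidefinite
block matrices, blockwise. -/
def IsCPMap {m n : Type} [Fintype m] [DecidableEq m] [Fintype n] [DecidableEq n]
    (Φ : Matrix m m ℂ →ₗ[ℂ] Matrix n n ℂ) : Prop :=
  ∀ (k : ℕ) (A : Matrix (Fin k × m) (Fin k × m) ℂ), A.PosSemidef →
    (Matrix.of fun (p q : Fin k × n) =>
      Φ (Matrix.of fun a b => A (p.1, a) (q.1, b)) p.2 q.2).PosSemidef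

/-- A quantum channel: a trace-preserving completely positive linear map. -/
def IsChannel {m n : Type} [Fintype m] [DecidableEq m] [Fintype n] [DecidableEq n]
    (Φ : Matrix m m ℂ →ₗ[ℂ] Matrix n n ℂ) : Prop :=
  IsCPMap Φ ∧ ∀ ρ : Matrix m m ℂ, (Φ ρ).trace = ρ.trace

/-- A POVM with finite outcome set `X`: positive semidefinite effects summing to the identity. -/
def IsPOVM {X : Type} [Fintype X] {m : Type} [Fintype m] [DecidableEq m]
    (M : X → Matrix m m ℂ) : Prop :=
  (∀ x, (M x).PosSemidef) ∧ ∑ x, M x = 1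

/-- A PVM: a POVM all of whose effects are orthogonal projections. -/
def IsPVM {X : Type} [Fintype X] {m : Type} [Fintype m] [DecidableEq m]
    (M : X → Matrix m m ℂ) : Prop :=
  IsPOVM M ∧ ∀ x, (M x)ᴴ = M x ∧ M x * M x = M x

/-- `G` is generated through broadcasting from `M` and `N` if there is a channel `Φ`
such that `tr[Φ(ρ)(M x ⊗ N y)] = tr[ρ G x y]` for all `ρ, x, y`. -/
def GenByBroadcast {X Y : Type} [Fintype X] [Fintype Y]
    {d m n : Type} [Fintype d] [DecidableEq d] [Fintype m] [DecidableEq m]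
    [Fintype n] [DecidableEq n]
    (M : X → Matrix m m ℂ) (N : Y → Matrix n n ℂ)
    (G : X → Y → Matrix d d ℂ) : Prop :=
  ∃ Φ : Matrix d d ℂ →ₗ[ℂ] Matrix (m × n) (m × n) ℂ, IsChannel Φ ∧
    ∀ (ρ : Matrix d d ℂ) (x : X) (y : Y),
      (Φ ρ * (M x ⊗ₖ N y)).trace = (ρ * G x y).trace

/-- A projective unitary representation of a group together with its multiplier. -/
def IsProjRep {G : Type} [Group G] {d : Type} [Fintype d] [DecidableEq d]
    (U : G → Matrix d d ℂ) (mult : G → G → ℂ) : Prop :=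
  U 1 = 1 ∧ (∀ g, (U g)ᴴ * U g = 1 ∧ U g * (U g)ᴴ = 1) ∧
  (∀ g h, ‖mult g h‖ = 1) ∧
  (∀ g, mult 1 g = 1) ∧ (∀ g, mult g 1 = 1) ∧
  (∀ g h k, mult g h * mult (g * h) k = mult g (h * k) * mult h k) ∧
  (∀ g h, U (g * h) = mult g h • (U g * U h))

section Aux
set_option linter.unusedSectionVars false
variable {l m n : Type} [Fintype l] [DecidableEq l] [Fintype m] [DecidableEq m]
  [Fintype n] [DecidableEq n]

/-- conjugation map ρ ↦ B ρ Bᴴ as a linear map -/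
def conjCP (B : Matrix n m ℂ) : Matrix m m ℂ →ₗ[ℂ] Matrix n n ℂ where
  toFun ρ := B * ρ * Bᴴ
  map_add' ρ σ := by simp [Matrix.mul_add, Matrix.add_mul]
  map_smul' c ρ := by simp [Matrix.mul_smul, Matrix.smul_mul]

@[simp] lemma conjCP_apply (B : Matrix n m ℂ) (ρ : Matrix m m ℂ) :
    conjCP B ρ = B * ρ * Bᴴ := rfl

lemma kron_conjT (A : Matrix m m ℂ) (B : Matrix n n ℂ) : (A ⊗ₖ B)ᴴ = Aᴴ ⊗ₖ Bᴴ := by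
  ext ⟨i,j⟩ ⟨k,l⟩
  simp [Matrix.conjTranspose_apply, star_mul']

lemma conjCP_block (B : Matrix n m ℂ) (k : ℕ) (A : Matrix (Fin k × m) (Fin k × m) ℂ) :
    (Matrix.of fun p q : Fin k × n =>
      (conjCP B) (Matrix.of fun a b => A (p.1, a) (q.1, b)) p.2 q.2)
      = ((1 : Matrix (Fin k) (Fin k) ℂ) ⊗ₖ B) * A * ((1 : Matrix (Fin k) (Fin k) ℂ) ⊗ₖ B)ᴴ := by
  ext ⟨i,a⟩ ⟨j,b⟩
  simp [Matrix.mul_apply, Matrix.conjTranspose_apply, Fintype.sum_prod_type, Matrix.one_apply,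
    Finset.mul_sum, Finset.sum_mul, apply_ite (star : ℂ → ℂ), mul_ite, ite_mul]

lemma isCPMap_conjCP (B : Matrix n m ℂ) : IsCPMap (conjCP B) := by
  intro k A hA
  rw [conjCP_block]
  exact hA.mul_mul_conjTranspose_same _

lemma IsCPMap.comp {Φ₁ : Matrix l l ℂ →ₗ[ℂ] Matrix m m ℂ} {Φ₂ : Matrix m m ℂ →ₗ[ℂ] Matrix n n ℂ}
    (h₂ : IsCPMap Φ₂) (h₁ : IsCPMap Φ₁) : IsCPMap (Φ₂ ∘ₗ Φ₁) := by
  intro k A hA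
  exact h₂ k _ (h₁ k A hA)

lemma posSemidef_smul {A : Matrix n n ℂ} (hA : A.PosSemidef) {c : ℂ} (hc : 0 ≤ c) :
    (c • A).PosSemidef := by
  have hcr : star c = c := by
    rw [Complex.star_def, Complex.conj_eq_iff_im]
    exact ((Complex.le_def.mp hc).2).symm
  constructor
  · rw [Matrix.IsHermitian, Matrix.conjTranspose_smul, hcr, hA.1.eq]
  · intro x
    exact (hA.smul hc).2 x

lemma isCPMap_smul {Φ : Matrix m m ℂ →ₗ[ℂ] Matrix n n ℂ} (h : IsCPMap Φ) {c : ℂ}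
    (hc : 0 ≤ c) : IsCPMap (c • Φ) := by
  intro k A hA
  have : (Matrix.of fun (p q : Fin k × n) =>
      (c • Φ) (Matrix.of fun a b => A (p.1, a) (q.1, b)) p.2 q.2)
      = c • (Matrix.of fun (p q : Fin k × n) =>
      Φ (Matrix.of fun a b => A (p.1, a) (q.1, b)) p.2 q.2) := by
    ext p q; simp
  rw [this]
  exact posSemidef_smul (h k A hA) hc

lemma isCPMap_sum {G : Type} [Fintype G] {F : G → (Matrix m m ℂ →ₗ[ℂ] Matrix n n ℂ)}
    (h : ∀ g, IsCPMap (F g)) : IsCPMap (∑ g, F g) := by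
  intro k A hA
  have : (Matrix.of fun (p q : Fin k × n) =>
      (∑ g, F g) (Matrix.of fun a b => A (p.1, a) (q.1, b)) p.2 q.2)
      = ∑ g, (Matrix.of fun (p q : Fin k × n) =>
      F g (Matrix.of fun a b => A (p.1, a) (q.1, b)) p.2 q.2) := by
    ext p q; simp [Matrix.sum_apply]
  rw [this]
  exact Finset.sum_induction _ _ (fun a b ha hb => ha.add hb) Matrix.PosSemidef.zero
    (fun g _ => h g k A hA)

end Aux

section Aux2
set_option linter.unusedSectionVars false
variable {G : Type} [Group G] {d d₁ d₂ : Type} [Fintype d] [DecidableEq d]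
  [Fintype d₁] [DecidableEq d₁] [Fintype d₂] [DecidableEq d₂]

lemma conj_mul_self {c : ℂ} (hc : ‖c‖ = 1) : star c * c = 1 := by
  rw [Complex.star_def, mul_comm, Complex.mul_conj, Complex.normSq_eq_norm_sq, hc]
  norm_num

lemma unit_cancel {P : Matrix d d ℂ} (h : Pᴴ * P = 1) (Z : Matrix d d ℂ) :
    Pᴴ * (P * Z) = Z := by rw [← Matrix.mul_assoc, h, one_mul]

lemma unit_cancel' {P : Matrix d d ℂ} (h : P * Pᴴ = 1) (Z : Matrix d d ℂ) :
    P * (Pᴴ * Z) = Z := by rw [← Matrix.mul_assoc, h, one_mul]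

lemma projRep_inv_conj {U : G → Matrix d d ℂ} {mU : G → G → ℂ} (hU : IsProjRep U mU)
    (g : G) (A : Matrix d d ℂ) :
    U g⁻¹ * A * (U g⁻¹)ᴴ = (U g)ᴴ * A * U g := by
  have hm := conj_mul_self (hU.2.2.1 g⁻¹ g)
  have h1 : mU g⁻¹ g • (U g⁻¹ * U g) = 1 := by
    rw [← hU.2.2.2.2.2.2 g⁻¹ g, inv_mul_cancel, hU.1]
  have h2 : U g⁻¹ = star (mU g⁻¹ g) • (U g)ᴴ := by
    calc U g⁻¹ = U g⁻¹ * (U g * (U g)ᴴ) := by rw [(hU.2.1 g).2, mul_one]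
      _ = star (mU g⁻¹ g) • ((mU g⁻¹ g • (U g⁻¹ * U g)) * (U g)ᴴ) := by
          rw [Matrix.smul_mul, smul_smul, hm, one_smul, Matrix.mul_assoc]
      _ = star (mU g⁻¹ g) • (U g)ᴴ := by rw [h1, one_mul]
  rw [h2, Matrix.conjTranspose_smul, star_star, Matrix.conjTranspose_conjTranspose,
    Matrix.smul_mul, Matrix.smul_mul, Matrix.mul_smul, smul_smul, hm, one_smul]

/-- adjoint covariance: if `U g * M x * (U g)ᴴ = M (g • x)` then conjugating by the
adjoint implements the inverse action. -/
lemma adj_cov {X : Type} [MulAction G X] {U : G → Matrix d d ℂ} {mU : G → G → ℂ}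
    (hU : IsProjRep U mU) {M : X → Matrix d d ℂ}
    (hcov : ∀ (g : G) (x : X), U g * M x * (U g)ᴴ = M (g • x)) (g : G) (x : X) :
    (U g)ᴴ * M x * U g = M (g⁻¹ • x) := by
  rw [← projRep_inv_conj hU, hcov g⁻¹ x]

lemma rep_conj_mul {W : G → Matrix d d ℂ} {mW : G → G → ℂ} (hW : IsProjRep W mW)
    (h g : G) (ρ : Matrix d d ℂ) :
    (W (h * g))ᴴ * (W h * ρ * (W h)ᴴ) * W (h * g) = (W g)ᴴ * ρ * W g := by
  have hm := conj_mul_self (hW.2.2.1 h g)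
  rw [hW.2.2.2.2.2.2 h g, Matrix.conjTranspose_smul, Matrix.conjTranspose_mul,
    Matrix.smul_mul, Matrix.smul_mul, Matrix.mul_smul, smul_smul, hm, one_smul]
  simp only [Matrix.mul_assoc]
  rw [unit_cancel (hW.2.1 h).1, unit_cancel (hW.2.1 h).1]

lemma kron_conjT' (A : Matrix d₁ d₁ ℂ) (B : Matrix d₂ d₂ ℂ) : (A ⊗ₖ B)ᴴ = Aᴴ ⊗ₖ Bᴴ := by
  ext ⟨i,j⟩ ⟨k,l⟩
  simp [Matrix.conjTranspose_apply, star_mul']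

lemma kron_rep_mul {U : G → Matrix d₁ d₁ ℂ} {mU : G → G → ℂ} (hU : IsProjRep U mU)
    {V : G → Matrix d₂ d₂ ℂ} {mV : G → G → ℂ} (hV : IsProjRep V mV) (h g : G) :
    U (h * g) ⊗ₖ V (h * g) = (mU h g * mV h g) • ((U h ⊗ₖ V h) * (U g ⊗ₖ V g)) := by
  rw [hU.2.2.2.2.2.2 h g, hV.2.2.2.2.2.2 h g, Matrix.smul_kronecker, Matrix.kronecker_smul,
    smul_smul, Matrix.mul_kronecker_mul]

lemma kron_conj_mul {U : G → Matrix d₁ d₁ ℂ} {mU : G → G → ℂ} (hU : IsProjRep U mU)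
    {V : G → Matrix d₂ d₂ ℂ} {mV : G → G → ℂ} (hV : IsProjRep V mV) (h g : G)
    (X : Matrix (d₁ × d₂) (d₁ × d₂) ℂ) :
    (U (h * g) ⊗ₖ V (h * g)) * X * (U (h * g) ⊗ₖ V (h * g))ᴴ
      = (U h ⊗ₖ V h) * ((U g ⊗ₖ V g) * X * (U g ⊗ₖ V g)ᴴ) * (U h ⊗ₖ V h)ᴴ := by
  have hm : mU h g * mV h g * star (mU h g * mV h g) = 1 := by
    rw [mul_comm]
    exact conj_mul_self (by rw [norm_mul, hU.2.2.1 h g, hV.2.2.1 h g, one_mul])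
  rw [kron_rep_mul hU hV, Matrix.conjTranspose_smul, Matrix.smul_mul, Matrix.smul_mul,
    Matrix.mul_smul, smul_smul, hm, one_smul, Matrix.conjTranspose_mul]
  simp only [Matrix.mul_assoc]

lemma kron_unitary_l {U : G → Matrix d₁ d₁ ℂ} {mU : G → G → ℂ} (hU : IsProjRep U mU)
    {V : G → Matrix d₂ d₂ ℂ} {mV : G → G → ℂ} (hV : IsProjRep V mV) (g : G) :
    (U g ⊗ₖ V g)ᴴ * (U g ⊗ₖ V g) = 1 := by
  rw [kron_conjT', ← Matrix.mul_kronecker_mul, (hU.2.1 g).1, (hV.2.1 g).1,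
    Matrix.one_kronecker_one]

lemma kron_unitary_r {U : G → Matrix d₁ d₁ ℂ} {mU : G → G → ℂ} (hU : IsProjRep U mU)
    {V : G → Matrix d₂ d₂ ℂ} {mV : G → G → ℂ} (hV : IsProjRep V mV) (g : G) :
    (U g ⊗ₖ V g) * (U g ⊗ₖ V g)ᴴ = 1 := by
  rw [kron_conjT', ← Matrix.mul_kronecker_mul, (hU.2.1 g).2, (hV.2.1 g).2,
    Matrix.one_kronecker_one]

lemma trace_conj {B : Matrix d₁ d₂ ℂ} (hB : Bᴴ * B = 1) (ρ : Matrix d₂ d₂ ℂ) :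
    (B * ρ * Bᴴ).trace = ρ.trace := by
  rw [Matrix.mul_assoc, Matrix.trace_mul_comm, Matrix.mul_assoc, hB, mul_one]

end Aux2

/-- symmetrization of the broadcasting channel: if a `(W, X×Y)`-covariant
POVM `G` can be generated through broadcasting from a `(U,X)`-covariant POVM `M` and a
`(V,Y)`-covariant POVM `N`, then the broadcasting channel can be chosen
`(W, U⊗V)`-covariant. -/
theorem statement13 (𝒢 : Type) [Group 𝒢] [Fintype 𝒢]
    (D D₁ D₂ : ℕ) (hD : 0 < D) (hD₁ : 0 < D₁) (hD₂ : 0 < D₂)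
    (U : 𝒢 → Matrix (Fin D₁) (Fin D₁) ℂ) (mU : 𝒢 → 𝒢 → ℂ) (hU : IsProjRep U mU)
    (V : 𝒢 → Matrix (Fin D₂) (Fin D₂) ℂ) (mV : 𝒢 → 𝒢 → ℂ) (hV : IsProjRep V mV)
    (W : 𝒢 → Matrix (Fin D) (Fin D) ℂ) (mW : 𝒢 → 𝒢 → ℂ) (hW : IsProjRep W mW)
    (X Y : Type) [Fintype X] [Fintype Y] [MulAction 𝒢 X] [MulAction 𝒢 Y]
    (M : X → Matrix (Fin D₁) (Fin D₁) ℂ) (hM : IsPOVM M)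
    (hMcov : ∀ (g : 𝒢) (x : X), U g * M x * (U g)ᴴ = M (g • x))
    (N : Y → Matrix (Fin D₂) (Fin D₂) ℂ) (hN : IsPOVM N)
    (hNcov : ∀ (g : 𝒢) (y : Y), V g * N y * (V g)ᴴ = N (g • y))
    (G : X × Y → Matrix (Fin D) (Fin D) ℂ) (hG : IsPOVM G)
    (hGcov : ∀ (g : 𝒢) (p : X × Y), W g * G p * (W g)ᴴ = G (g • p.1, g • p.2))
    (Ψ : Matrix (Fin D) (Fin D) ℂ →ₗ[ℂ] Matrix (Fin D₁ × Fin D₂) (Fin D₁ × Fin D₂) ℂ)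
    (hΨ : IsChannel Ψ)
    (hΨG : ∀ (ρ : Matrix (Fin D) (Fin D) ℂ) (x : X) (y : Y),
      (Ψ ρ * (M x ⊗ₖ N y)).trace = (ρ * G (x, y)).trace) :
    ∃ Φ : Matrix (Fin D) (Fin D) ℂ →ₗ[ℂ] Matrix (Fin D₁ × Fin D₂) (Fin D₁ × Fin D₂) ℂ,
      IsChannel Φ ∧
      (∀ (ρ : Matrix (Fin D) (Fin D) ℂ) (x : X) (y : Y),
        (Φ ρ * (M x ⊗ₖ N y)).trace = (ρ * G (x, y)).trace) ∧
      ∀ (g : 𝒢) (ρ : Matrix (Fin D) (Fin D) ℂ),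
        Φ (W g * ρ * (W g)ᴴ) = (U g ⊗ₖ V g) * Φ ρ * (U g ⊗ₖ V g)ᴴ := by
  classical
  obtain ⟨hΨcp, hΨtr⟩ := hΨ
  have hUu := hU.2.1
  have hVu := hV.2.1
  have hWu := hW.2.1
  set A : 𝒢 → Matrix (Fin D₁ × Fin D₂) (Fin D₁ × Fin D₂) ℂ := fun g => U g ⊗ₖ V g with hAdef
  have hAl : ∀ g, (A g)ᴴ * A g = 1 := fun g => kron_unitary_l hU hV g
  have hAr : ∀ g, A g * (A g)ᴴ = 1 := fun g => kron_unitary_r hU hV g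
  set c : ℂ := ((Fintype.card 𝒢 : ℂ))⁻¹ with hcdef
  have hcard : (Fintype.card 𝒢 : ℂ) ≠ 0 := by
    exact_mod_cast Nat.cast_ne_zero.mpr Fintype.card_ne_zero
  have hc0 : (0 : ℂ) ≤ c := by
    rw [hcdef, show ((Fintype.card 𝒢 : ℂ)) = (((Fintype.card 𝒢 : ℝ)) : ℂ) by push_cast; ring,
      ← Complex.ofReal_inv]
    exact Complex.zero_le_real.mpr (by positivity)
  set Φ : Matrix (Fin D) (Fin D) ℂ →ₗ[ℂ] Matrix (Fin D₁ × Fin D₂) (Fin D₁ × Fin D₂) ℂ :=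
    c • ∑ g : 𝒢, (conjCP (A g)) ∘ₗ (Ψ ∘ₗ conjCP ((W g)ᴴ)) with hΦdef
  have hΦapp : ∀ ρ, Φ ρ = c • ∑ g : 𝒢, A g * Ψ ((W g)ᴴ * ρ * W g) * (A g)ᴴ := by
    intro ρ
    rw [hΦdef]
    simp only [LinearMap.smul_apply, LinearMap.sum_apply, LinearMap.comp_apply, conjCP_apply,
      Matrix.conjTranspose_conjTranspose]
  refine ⟨Φ, ⟨?_, ?_⟩, ?_, ?_⟩
  · -- completely positive
    exact isCPMap_smul (isCPMap_sum fun g =>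
      (isCPMap_conjCP (A g)).comp ((hΨcp).comp (isCPMap_conjCP ((W g)ᴴ)))) hc0
  · -- trace preserving
    intro ρ
    rw [hΦapp, Matrix.trace_smul, Matrix.trace_sum]
    have hterm : ∀ g : 𝒢, (A g * Ψ ((W g)ᴴ * ρ * W g) * (A g)ᴴ).trace = ρ.trace := by
      intro g
      rw [trace_conj (hAl g), hΨtr,
        show (W g)ᴴ * ρ * W g = (W g)ᴴ * ρ * ((W g)ᴴ)ᴴ by
          rw [Matrix.conjTranspose_conjTranspose],
        trace_conj (by rw [Matrix.conjTranspose_conjTranspose]; exact (hWu g).2)]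
    rw [Finset.sum_congr rfl fun g _ => hterm g, Finset.sum_const, Finset.card_univ,
      nsmul_eq_mul, smul_eq_mul, hcdef, inv_mul_cancel_left₀ hcard]
  · -- generates G through broadcasting
    intro ρ x y
    rw [hΦapp, Matrix.smul_mul, Matrix.trace_smul, Finset.sum_mul, Matrix.trace_sum]
    have hterm : ∀ g : 𝒢,
        (A g * Ψ ((W g)ᴴ * ρ * W g) * (A g)ᴴ * (M x ⊗ₖ N y)).trace
          = (ρ * G (x, y)).trace := by
      intro g
      have e1 : A g * Ψ ((W g)ᴴ * ρ * W g) * (A g)ᴴ * (M x ⊗ₖ N y)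
          = A g * (Ψ ((W g)ᴴ * ρ * W g) * ((A g)ᴴ * (M x ⊗ₖ N y))) := by
        simp only [Matrix.mul_assoc]
      rw [e1, Matrix.trace_mul_comm,
        show Ψ ((W g)ᴴ * ρ * W g) * ((A g)ᴴ * (M x ⊗ₖ N y)) * A g
          = Ψ ((W g)ᴴ * ρ * W g) * ((A g)ᴴ * (M x ⊗ₖ N y) * A g) by
            simp only [Matrix.mul_assoc]]
      have e2 : (A g)ᴴ * (M x ⊗ₖ N y) * A g = M (g⁻¹ • x) ⊗ₖ N (g⁻¹ • y) := by
        rw [hAdef]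
        simp only
        rw [kron_conjT', ← Matrix.mul_kronecker_mul, ← Matrix.mul_kronecker_mul,
          adj_cov hU hMcov g x, adj_cov hV hNcov g y]
      rw [e2, hΨG ((W g)ᴴ * ρ * W g) (g⁻¹ • x) (g⁻¹ • y)]
      have e3 : G (g⁻¹ • x, g⁻¹ • y) = (W g)ᴴ * G (x, y) * W g := by
        have := adj_cov (X := X × Y) hW
          (M := G) (hcov := fun g p => hGcov g p) g (x, y)
        rw [this]
        rfl
      rw [e3]
      have e4 : (W g)ᴴ * ρ * W g * ((W g)ᴴ * G (x, y) * W g)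
          = (W g)ᴴ * (ρ * G (x, y) * W g) := by
        simp only [Matrix.mul_assoc]
        rw [unit_cancel' (hWu g).2]
      rw [e4, Matrix.trace_mul_comm,
        show ρ * G (x, y) * W g * (W g)ᴴ = ρ * G (x, y) * (W g * (W g)ᴴ) by
          simp only [Matrix.mul_assoc],
        (hWu g).2, mul_one]
    rw [Finset.sum_congr rfl fun g _ => hterm g, Finset.sum_const, Finset.card_univ,
      nsmul_eq_mul, smul_eq_mul, hcdef, inv_mul_cancel_left₀ hcard]
  · -- covariance
    intro g ρ
    rw [hΦapp, hΦapp]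
    have hre : ∑ h : 𝒢, A h * Ψ ((W h)ᴴ * (W g * ρ * (W g)ᴴ) * W h) * (A h)ᴴ
        = ∑ h : 𝒢, A (g * h) * Ψ ((W (g * h))ᴴ * (W g * ρ * (W g)ᴴ) * W (g * h)) * (A (g * h))ᴴ :=
      (Fintype.sum_equiv (Equiv.mulLeft g)
        (fun h => A (g * h) * Ψ ((W (g * h))ᴴ * (W g * ρ * (W g)ᴴ) * W (g * h)) * (A (g * h))ᴴ)
        (fun h => A h * Ψ ((W h)ᴴ * (W g * ρ * (W g)ᴴ) * W h) * (A h)ᴴ)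
        (fun h => rfl)).symm
    rw [hre]
    have hterm : ∀ h : 𝒢,
        A (g * h) * Ψ ((W (g * h))ᴴ * (W g * ρ * (W g)ᴴ) * W (g * h)) * (A (g * h))ᴴ
          = (U g ⊗ₖ V g) * (A h * Ψ ((W h)ᴴ * ρ * W h) * (A h)ᴴ) * (U g ⊗ₖ V g)ᴴ := by
      intro h
      rw [rep_conj_mul hW g h ρ, hAdef]
      simp only
      exact kron_conj_mul hU hV g h _
    rw [Finset.sum_congr rfl fun h _ => hterm h]
    rw [Matrix.mul_smul, Matrix.smul_mul, Finset.mul_sum, Finset.sum_mul]
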